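/- Let θ satisfy 1 < θ < 2 and consider the recurrence e(n+1) = e(n) + (α n + θ e(n)) / (n + α + β − 1) with e(1) = 0, α > 0, β ≥ 0. Then there exists a constant C > 0 such that e(n)/n^θ → C as n → ∞. -/

import Mathlib

open Filter

lemma log_one_add_bounds {x : ℝ} (hx : 0 < x) :
    x / (1 + x) ≤ Real.log (1 + x) ∧ Real.log (1 + x) ≤ x := by
  have h1 : (0:ℝ) < 1 + x := by linarith
  constructor
  · have h2 : Real.log (1 + x)⁻¹ ≤ (1 + x)⁻¹ - 1 :=
      Real.log_le_sub_one_of_pos (by positivity)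
    rw [Real.log_inv] at h2
    have h3 : (1 + x)⁻¹ - 1 = -(x / (1 + x)) := by field_simp; ring
    rw [h3] at h2
    linarith
  · have := Real.log_le_sub_one_of_pos h1
    linarith

set_option maxHeartbeats 1000000 in
/-- Supercritical DAPA regime: for `1 < θ < 2` the recurrence
`e(n+1) = e(n) + (α n + θ e(n)) / (n + α + β − 1)` with `e 1 = 0`, `α > 0`, `β ≥ 0`
satisfies `e(n)/n^θ → C` for some constant `C > 0`. -/
theorem stmt_8 (α β θ : ℝ) (hα : 0 < α) (hβ : 0 ≤ β) (hθ1 : 1 < θ) (hθ2 : θ < 2)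
    (e : ℕ → ℝ) (h1 : e 1 = 0)
    (hrec : ∀ n : ℕ, 1 ≤ n →
      e (n + 1) = e n + (α * n + θ * e n) / (n + α + β - 1)) :
    ∃ C : ℝ, 0 < C ∧
      Tendsto (fun n : ℕ => e n / (n : ℝ) ^ θ) atTop (nhds C) := by
  set γ : ℝ := α + β - 1 with hγdef
  have hγ : (-1:ℝ) < γ := by rw [hγdef]; linarith
  have hθ0 : (0:ℝ) < θ := by linarith
  have hkγ : ∀ k : ℕ, 1 ≤ k → 0 < (k:ℝ) + γ := by
    intro k hk
    have : (1:ℝ) ≤ (k:ℝ) := by exact_mod_cast hk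
    linarith
  set f : ℕ → ℝ := fun k => 1 + θ / ((k:ℝ) + γ) with hfdef
  have hf1 : ∀ k : ℕ, 1 ≤ k → 1 < f k := by
    intro k hk
    have h := hkγ k hk
    have h2 : 0 < θ / ((k:ℝ) + γ) := div_pos hθ0 h
    simp only [hfdef]
    linarith
  set P : ℕ → ℝ := fun n => ∏ k ∈ Finset.Ico 1 n, f k with hPdef
  have hP : ∀ n, 0 < P n := by
    intro n
    apply Finset.prod_pos
    intro k hk
    exact lt_trans one_pos (hf1 k (Finset.mem_Ico.mp hk).1)
  have hPsucc : ∀ n : ℕ, 1 ≤ n → P (n + 1) = P n * f n := by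
    intro n hn
    exact Finset.prod_Ico_succ_top hn f
  -- the logarithmic increments
  set u : ℕ → ℝ := fun k => Real.log (f k) - θ * Real.log (1 + 1 / (k:ℝ)) with hudef
  have hu_sum : Summable u := by
    apply Summable.of_norm_bounded_eventually_nat (g :=
      (fun k => (θ * (2 * |1 - γ|) + θ * (γ + θ)) / ((k:ℝ))^2))
    · simpa [div_eq_mul_inv] using
        (Real.summable_nat_pow_inv.mpr (by norm_num : 1 < 2)).mul_left
          (θ * (2 * |1 - γ|) + θ * (γ + θ))
    · filter_upwards [eventually_ge_atTop 2] with k hk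
      have hk1 : 1 ≤ k := le_trans (by norm_num) hk
      have hkr : (2:ℝ) ≤ (k:ℝ) := by exact_mod_cast hk
      have hkγp : 0 < (k:ℝ) + γ := hkγ k hk1
      have hkp : (0:ℝ) < (k:ℝ) := by linarith
      set a : ℝ := θ / ((k:ℝ) + γ) with hadef
      set b : ℝ := 1 / (k:ℝ) with hbdef
      have hap : 0 < a := div_pos hθ0 hkγp
      have hbp : 0 < b := by positivity
      obtain ⟨hla, hla'⟩ := log_one_add_bounds hap
      obtain ⟨hlb, hlb'⟩ := log_one_add_bounds hbp
      have hfk : f k = 1 + a := rfl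
      have hγθ : 0 < γ + θ := by linarith
      -- identities
      have ha1 : a / (1 + a) = θ / ((k:ℝ) + γ + θ) := by
        rw [hadef]
        have hne : (k:ℝ) + γ + θ ≠ 0 := by positivity
        field_simp
      have hb1 : b / (1 + b) = 1 / ((k:ℝ) + 1) := by
        rw [hbdef]
        have hne : (k:ℝ) + 1 ≠ 0 := by positivity
        field_simp
      rw [ha1] at hla
      rw [hb1] at hlb
      -- upper bound
      have hub : u k ≤ (θ * (2 * |1 - γ|)) / ((k:ℝ))^2 := by
        have h2 : u k ≤ a - θ * (1 / ((k:ℝ) + 1)) := by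
          simp only [hudef, hfk]
          have := mul_le_mul_of_nonneg_left hlb (le_of_lt hθ0)
          linarith
        have h3 : a - θ * (1 / ((k:ℝ) + 1)) ≤ (θ * (2 * |1 - γ|)) / ((k:ℝ))^2 := by
          rw [hadef, mul_one_div]
          rw [div_sub_div _ _ (ne_of_gt hkγp) (by positivity), div_le_div_iff₀ (by positivity) (by positivity)]
          have hle : θ * (1 - γ) ≤ θ * |1 - γ| :=
            mul_le_mul_of_nonneg_left (le_abs_self _) (le_of_lt hθ0)
          have habs : 0 ≤ θ * |1 - γ| := by positivity
          have hd : (k:ℝ)^2 ≤ 2 * (((k:ℝ) + γ) * ((k:ℝ) + 1)) := by nlinarith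
          nlinarith [sq_nonneg (k:ℝ)]
        linarith
      -- lower bound
      have hlb2 : -(u k) ≤ θ * (γ + θ) / ((k:ℝ))^2 := by
        have h2 : -(u k) ≤ θ * b - θ / ((k:ℝ) + γ + θ) := by
          simp only [hudef, hfk]
          have := mul_le_mul_of_nonneg_left hlb' (le_of_lt hθ0)
          linarith
        have h3 : θ * b - θ / ((k:ℝ) + γ + θ) ≤ θ * (γ + θ) / ((k:ℝ))^2 := by
          rw [hbdef, mul_one_div]
          rw [div_sub_div _ _ (ne_of_gt hkp) (by positivity), div_le_div_iff₀ (by positivity) (by positivity)]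
          nlinarith [mul_nonneg (mul_nonneg (mul_nonneg hθ0.le hγθ.le) hkp.le) hγθ.le]
        linarith
      rw [Real.norm_eq_abs, abs_le]
      have hA : 0 ≤ θ * (2 * |1 - γ|) / ((k:ℝ))^2 := by positivity
      have hB : 0 ≤ θ * (γ + θ) / ((k:ℝ))^2 := by positivity
      have hsum : θ * (2 * |1 - γ|) / ((k:ℝ))^2 + θ * (γ + θ) / ((k:ℝ))^2
          = (θ * (2 * |1 - γ|) + θ * (γ + θ)) / ((k:ℝ))^2 := by rw [← add_div]
      constructor
      · linarith
      · linarith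
  -- telescoping sum of logs
  have hlog : ∀ n : ℕ, 1 ≤ n →
      ∑ k ∈ Finset.Ico 1 n, Real.log (1 + 1 / (k:ℝ)) = Real.log n := by
    intro n hn
    induction n, hn using Nat.le_induction with
    | base => simp
    | succ n hn ih =>
      have hnp : (0:ℝ) < (n:ℝ) := by exact_mod_cast hn
      rw [Finset.sum_Ico_succ_top hn, ih]
      rw [← Real.log_mul (ne_of_gt hnp) (by positivity)]
      congr 1
      push_cast
      field_simp
  -- closed form for P n / n^θ
  have hPform : ∀ n : ℕ, 1 ≤ n →
      P n / (n:ℝ) ^ θ = Real.exp (∑ k ∈ Finset.Ico 1 n, u k) := by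
    intro n hn
    have hn0 : (0:ℝ) < (n:ℝ) := by exact_mod_cast hn
    have hsum : ∑ k ∈ Finset.Ico 1 n, u k = Real.log (P n) - θ * Real.log n := by
      simp only [hudef]
      rw [Finset.sum_sub_distrib, ← Finset.mul_sum, hlog n hn]
      congr 1
      rw [hPdef]
      exact (Real.log_prod (fun k hk =>
        ne_of_gt (lt_trans one_pos (hf1 k (Finset.mem_Ico.mp hk).1)))).symm
    rw [hsum, Real.exp_sub, Real.exp_log (hP n), Real.rpow_def_of_pos hn0, mul_comm]
  -- convergence of the partial sums over Ico 1 n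
  have hIcoEq : ∀ n : ℕ, 1 ≤ n →
      ∑ k ∈ Finset.Ico 1 n, u k = (∑ k ∈ Finset.range n, u k) - u 0 := by
    intro n hn
    rw [Finset.sum_Ico_eq_sub _ hn, Finset.sum_range_one]
  have hIco : Tendsto (fun n : ℕ => ∑ k ∈ Finset.Ico 1 n, u k) atTop
      (nhds ((∑' k, u k) - u 0)) := by
    apply Tendsto.congr' _ (hu_sum.hasSum.tendsto_sum_nat.sub_const (u 0))
    filter_upwards [eventually_ge_atTop 1] with n hn
    exact (hIcoEq n hn).symm
  set L : ℝ := Real.exp ((∑' k, u k) - u 0) with hLdef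
  have hLpos : 0 < L := Real.exp_pos _
  have hPL : Tendsto (fun n : ℕ => P n / (n:ℝ) ^ θ) atTop (nhds L) := by
    apply Tendsto.congr' _ ((Real.continuous_exp.tendsto _).comp hIco)
    filter_upwards [eventually_ge_atTop 1] with n hn
    exact (hPform n hn).symm
  -- the series g
  set g : ℕ → ℝ := fun k => α * k / (((k:ℝ) + γ) * P (k + 1)) with hgdef
  have hgnonneg : ∀ k, 0 ≤ g k := by
    intro k
    rcases Nat.eq_zero_or_pos k with h | h
    · subst h; simp [hgdef]
    · exact div_nonneg (by positivity) (le_of_lt (mul_pos (hkγ k h) (hP _)))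
  have hev : ∀ᶠ n : ℕ in atTop, L / 2 * (n:ℝ) ^ θ ≤ P n := by
    have h2 : ∀ᶠ n : ℕ in atTop, L / 2 < P n / (n:ℝ) ^ θ :=
      hPL.eventually (eventually_gt_nhds (half_lt_self hLpos))
    filter_upwards [h2, eventually_ge_atTop 1] with n hn hn1
    have hn0 : (0:ℝ) < (n:ℝ) := by exact_mod_cast hn1
    have hpow : (0:ℝ) < (n:ℝ) ^ θ := Real.rpow_pos_of_pos hn0 θ
    rw [lt_div_iff₀ hpow] at hn
    linarith
  have hg_sum : Summable g := by
    apply Summable.of_norm_bounded_eventually_nat (g := fun k => (4 * α / L) * ((k:ℝ) ^ θ)⁻¹)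
    · exact (Real.summable_nat_rpow_inv.mpr hθ1).mul_left _
    · have hev' : ∀ᶠ k : ℕ in atTop, L / 2 * ((k + 1 : ℕ):ℝ) ^ θ ≤ P (k + 1) :=
        (tendsto_add_atTop_nat 1).eventually hev
      filter_upwards [hev', eventually_ge_atTop 2] with k h1 h2
      have hk1 : 1 ≤ k := le_trans (by norm_num) h2
      have hkr : (2:ℝ) ≤ (k:ℝ) := by exact_mod_cast h2
      have hkp : (0:ℝ) < (k:ℝ) := by linarith
      have hkγp : 0 < (k:ℝ) + γ := hkγ k hk1
      have hpowk : (0:ℝ) < (k:ℝ) ^ θ := Real.rpow_pos_of_pos hkp θ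
      have hmono : (k:ℝ) ^ θ ≤ ((k + 1 : ℕ):ℝ) ^ θ := by
        apply Real.rpow_le_rpow hkp.le _ hθ0.le
        push_cast; linarith
      have hD0 : (0:ℝ) < ((k:ℝ) / 2) * (L / 2 * (k:ℝ) ^ θ) := by positivity
      have hDle : ((k:ℝ) / 2) * (L / 2 * (k:ℝ) ^ θ) ≤ ((k:ℝ) + γ) * P (k + 1) := by
        apply mul_le_mul _ _ (by positivity) hkγp.le
        · linarith
        · calc L / 2 * (k:ℝ) ^ θ ≤ L / 2 * ((k + 1 : ℕ):ℝ) ^ θ := by nlinarith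
            _ ≤ P (k + 1) := h1
      rw [Real.norm_eq_abs, abs_of_nonneg (hgnonneg k)]
      calc g k ≤ α * k / (((k:ℝ) / 2) * (L / 2 * (k:ℝ) ^ θ)) :=
            div_le_div_of_nonneg_left (by positivity) hD0 hDle
        _ = (4 * α / L) * ((k:ℝ) ^ θ)⁻¹ := by
            field_simp
            ring
  set S : ℝ := ∑' k, g k with hSdef
  have hg1 : 0 < g 1 := by
    have := hkγ 1 le_rfl
    have := hP 2
    apply div_pos (by push_cast; linarith) (mul_pos (by push_cast [Nat.cast_one] at *; simpa using hkγ 1 le_rfl) (hP 2))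
  have hSpos : 0 < S := lt_of_lt_of_le hg1 (Summable.le_tsum hg_sum 1 (fun j _ => hgnonneg j))
  have hT : Tendsto (fun n : ℕ => ∑ k ∈ Finset.Ico 1 n, g k) atTop (nhds S) := by
    have hg0 : g 0 = 0 := by simp [hgdef]
    apply Tendsto.congr' _ hg_sum.hasSum.tendsto_sum_nat
    filter_upwards [eventually_ge_atTop 1] with n hn
    rw [Finset.sum_Ico_eq_sub _ hn, Finset.sum_range_one, hg0, sub_zero]
  -- closed-form solution of the recurrence
  have heT : ∀ n : ℕ, 1 ≤ n → e n = P n * ∑ k ∈ Finset.Ico 1 n, g k := by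
    intro n hn
    induction n, hn using Nat.le_induction with
    | base => simp [h1]
    | succ n hn ih =>
      have hnγ : ((n:ℝ) + γ) ≠ 0 := (hkγ n hn).ne'
      have hfn : f n ≠ 0 := ne_of_gt (lt_trans one_pos (hf1 n hn))
      have hPn : P n ≠ 0 := (hP n).ne'
      have hrw : ((n:ℝ) + α + β - 1) = (n:ℝ) + γ := by rw [hγdef]; ring
      rw [hrec n hn, ih, Finset.sum_Ico_succ_top hn, hPsucc n hn, hrw]
      have hgn : g n = α * n / (((n:ℝ) + γ) * (P n * f n)) := by
        rw [hgdef]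
        simp only []
        rw [hPsucc n hn]
      rw [hgn]
      rw [mul_add]
      have key : (P n * f n) * (α * n / (((n:ℝ) + γ) * (P n * f n)))
          = α * n / ((n:ℝ) + γ) := by
        have hPf : P n * f n ≠ 0 := mul_ne_zero hPn hfn
        rw [mul_comm ((n:ℝ) + γ) (P n * f n), ← div_div, ← mul_div_assoc,
          ← mul_div_assoc, mul_div_cancel_left₀ _ hPf]
      rw [key]
      have hfval : f n = 1 + θ / ((n:ℝ) + γ) := rfl
      rw [hfval]
      field_simp
      ring
  -- conclusion
  refine ⟨S * L, mul_pos hSpos hLpos, ?_⟩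
  apply Tendsto.congr' _ (hT.mul hPL)
  filter_upwards [eventually_ge_atTop 1] with n hn
  rw [heT n hn]
  have hn0 : (0:ℝ) < (n:ℝ) := by exact_mod_cast hn
  have hpow : ((n:ℝ) ^ θ) ≠ 0 := (Real.rpow_pos_of_pos hn0 θ).ne'
  field_simp
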